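/- Let a ∈ [0, 1/2]. There exists a constant C > 0 such that for all t ≥ 0 one has ∫₀ᵗ (1 + t − s)^{−a} (1 + s)^{−3/2} ds ≤ C (1 + t)^{−a}. -/

import Mathlib

open Real MeasureTheory

/-- The convolution-in-time estimate: for `a ∈ [0, 1/2]` there is `C > 0` such that
`∫₀ᵗ (1+t-s)^{-a} (1+s)^{-3/2} ds ≤ C (1+t)^{-a}` for all `t ≥ 0`. -/
theorem time_convolution_estimate (a : ℝ) (ha0 : 0 ≤ a) (ha : a ≤ 1 / 2) :
    ∃ C : ℝ, 0 < C ∧ ∀ t : ℝ, 0 ≤ t →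
      ∫ s in (0:ℝ)..t, (1 + t - s) ^ (-a) * (1 + s) ^ (-(3 / 2 : ℝ)) ≤
        C * (1 + t) ^ (-a) := by
  refine ⟨10, by norm_num, fun t ht => ?_⟩
  have h1t : (0:ℝ) < 1 + t := by linarith
  have huIcc : Set.uIcc (0:ℝ) t = Set.Icc 0 t := Set.uIcc_of_le ht
  have hpos1 : ∀ s ∈ Set.uIcc (0:ℝ) t, (0:ℝ) < 1 + t - s := by
    intro s hs; rw [huIcc] at hs; obtain ⟨_, h2⟩ := hs; linarith
  have hpos2 : ∀ s ∈ Set.uIcc (0:ℝ) t, (0:ℝ) < 1 + s := by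
    intro s hs; rw [huIcc] at hs; obtain ⟨h1, _⟩ := hs; linarith
  -- continuity / integrability
  have hc1 : ContinuousOn (fun s : ℝ => (1 + t - s) ^ (-a)) (Set.uIcc 0 t) :=
    (continuousOn_const.sub continuousOn_id).rpow_const
      (fun s hs => Or.inl (hpos1 s hs).ne')
  have hc2 : ContinuousOn (fun s : ℝ => (1 + s) ^ (-(3/2:ℝ))) (Set.uIcc 0 t) :=
    (continuousOn_const.add continuousOn_id).rpow_const
      (fun s hs => Or.inl (hpos2 s hs).ne')
  have hint_f : IntervalIntegrable
      (fun s : ℝ => (1 + t - s) ^ (-a) * (1 + s) ^ (-(3/2:ℝ))) volume 0 t :=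
    (hc1.mul hc2).intervalIntegrable
  have hint_g1 : IntervalIntegrable
      (fun s : ℝ => 2 * (1 + t) ^ (-a) * (1 + s) ^ (-(3/2:ℝ))) volume 0 t :=
    (continuousOn_const.mul hc2).intervalIntegrable
  have hint_g2 : IntervalIntegrable
      (fun s : ℝ => 3 * (1 + t) ^ (-(3/2:ℝ)) * (1 + t - s) ^ (-a)) volume 0 t :=
    (continuousOn_const.mul hc1).intervalIntegrable
  -- 2^a ≤ 2 and 2^(3/2) ≤ 3
  have h2a : (2:ℝ) ^ a ≤ 2 := by
    calc (2:ℝ) ^ a ≤ (2:ℝ) ^ (1:ℝ) :=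
          Real.rpow_le_rpow_of_exponent_le one_le_two (by linarith)
      _ = 2 := Real.rpow_one 2
  have h232 : (2:ℝ) ^ ((3:ℝ)/2) ≤ 3 := by
    have hsq : ((2:ℝ) ^ ((3:ℝ)/2)) ^ (2:ℕ) = 2 ^ (3:ℝ) := by
      rw [← Real.rpow_natCast ((2:ℝ) ^ ((3:ℝ)/2)) 2, ← Real.rpow_mul (by norm_num)]
      norm_num
    have h8 : (2:ℝ) ^ (3:ℝ) = 8 := by
      rw [show (3:ℝ) = ((3:ℕ):ℝ) by norm_num, Real.rpow_natCast]; norm_num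
    nlinarith [Real.rpow_nonneg (by norm_num : (0:ℝ) ≤ 2) ((3:ℝ)/2)]
  -- pointwise bound
  have hmono : ∫ s in (0:ℝ)..t, (1 + t - s) ^ (-a) * (1 + s) ^ (-(3/2:ℝ)) ≤
      ∫ s in (0:ℝ)..t, (2 * (1 + t) ^ (-a) * (1 + s) ^ (-(3/2:ℝ)) +
        3 * (1 + t) ^ (-(3/2:ℝ)) * (1 + t - s) ^ (-a)) := by
    apply intervalIntegral.integral_mono_on ht hint_f (hint_g1.add hint_g2)
    intro s hs
    obtain ⟨hs0, hst⟩ := hs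
    have h1s : (0:ℝ) < 1 + s := by linarith
    have h1ts : (0:ℝ) < 1 + t - s := by linarith
    have hhalf : (0:ℝ) < (1 + t) / 2 := by linarith
    rcases le_or_gt s (t/2) with hc | hc
    · -- 1 + t - s ≥ (1+t)/2, so (1+t-s)^(-a) ≤ 2 (1+t)^(-a)
      have hb : (1 + t - s) ^ (-a) ≤ ((1 + t)/2) ^ (-a) :=
        Real.rpow_le_rpow_of_nonpos hhalf (by linarith) (by linarith)
      have heq : ((1 + t)/2) ^ (-a) = (1 + t) ^ (-a) * 2 ^ a := by
        rw [Real.div_rpow (by linarith) (by norm_num : (0:ℝ) ≤ 2),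
          Real.rpow_neg (by norm_num : (0:ℝ) ≤ 2), div_eq_mul_inv, inv_inv]
      have hb2 : (1 + t - s) ^ (-a) ≤ 2 * (1 + t) ^ (-a) := by
        rw [heq] at hb
        have := mul_le_mul_of_nonneg_left h2a
          (Real.rpow_nonneg h1t.le (-a))
        linarith
      have := mul_le_mul_of_nonneg_right hb2 (Real.rpow_nonneg h1s.le (-(3/2:ℝ)))
      have hnn : 0 ≤ 3 * (1 + t) ^ (-(3/2:ℝ)) * (1 + t - s) ^ (-a) := by positivity
      linarith
    · -- 1 + s ≥ (1+t)/2, so (1+s)^(-3/2) ≤ 3 (1+t)^(-3/2)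
      have hb : (1 + s) ^ (-(3/2:ℝ)) ≤ ((1 + t)/2) ^ (-(3/2:ℝ)) :=
        Real.rpow_le_rpow_of_nonpos hhalf (by linarith) (by norm_num)
      have heq : ((1 + t)/2) ^ (-(3/2:ℝ)) = (1 + t) ^ (-(3/2:ℝ)) * 2 ^ ((3:ℝ)/2) := by
        rw [Real.div_rpow (by linarith) (by norm_num : (0:ℝ) ≤ 2),
          Real.rpow_neg (by linarith) ((3:ℝ)/2),
          Real.rpow_neg (by norm_num : (0:ℝ) ≤ 2) ((3:ℝ)/2), div_eq_mul_inv, inv_inv,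
          ← Real.rpow_neg (by linarith)]
      have hb2 : (1 + s) ^ (-(3/2:ℝ)) ≤ 3 * (1 + t) ^ (-(3/2:ℝ)) := by
        rw [heq] at hb
        have := mul_le_mul_of_nonneg_left h232
          (Real.rpow_nonneg h1t.le (-(3/2:ℝ)))
        linarith
      have := mul_le_mul_of_nonneg_left hb2 (Real.rpow_nonneg h1ts.le (-a))
      have hnn : 0 ≤ 2 * (1 + t) ^ (-a) * (1 + s) ^ (-(3/2:ℝ)) := by positivity
      linarith
  -- compute the two model integrals
  have hI1 : ∫ s in (0:ℝ)..t, (1 + s) ^ (-(3/2:ℝ)) ≤ 2 := by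
    have hF : ∀ s ∈ Set.uIcc (0:ℝ) t,
        HasDerivAt (fun s : ℝ => -2 * (1 + s) ^ (-(1/2:ℝ))) ((1 + s) ^ (-(3/2:ℝ))) s := by
      intro s hs
      have h1s := hpos2 s hs
      have hd : HasDerivAt (fun s : ℝ => 1 + s) 1 s := (hasDerivAt_id s).const_add 1
      have h2 := (hd.rpow_const (p := -(1/2:ℝ)) (Or.inl h1s.ne')).const_mul (-2:ℝ)
      refine h2.congr_deriv ?_
      rw [show -(1/2:ℝ) - 1 = -(3/2:ℝ) by norm_num]
      ring
    have heq := intervalIntegral.integral_eq_sub_of_hasDerivAt hF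
      hc2.intervalIntegrable
    rw [heq]
    have h1 : (0:ℝ) ≤ (1 + t) ^ (-(1/2:ℝ)) := Real.rpow_nonneg h1t.le _
    have h2 : ((1:ℝ) + 0) ^ (-(1/2:ℝ)) = 1 := by norm_num [Real.one_rpow]
    rw [h2]; linarith
  have hI2 : ∫ s in (0:ℝ)..t, (1 + t - s) ^ (-a) ≤ 2 * (1 + t) ^ (1 - a) := by
    have hane : (1:ℝ) - a ≠ 0 := by intro h; linarith [ha, (by linarith : a = 1)]
    have hF : ∀ s ∈ Set.uIcc (0:ℝ) t,
        HasDerivAt (fun s : ℝ => -(1 - a)⁻¹ * (1 + t - s) ^ (1 - a)) ((1 + t - s) ^ (-a)) s := by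
      intro s hs
      have h1ts := hpos1 s hs
      have hd : HasDerivAt (fun s : ℝ => 1 + t - s) (-1) s := by
        simpa using (hasDerivAt_id s).const_sub (1 + t)
      have h2 := (hd.rpow_const (p := 1 - a) (Or.inl h1ts.ne')).const_mul (-(1 - a)⁻¹)
      refine h2.congr_deriv ?_
      rw [show (1:ℝ) - a - 1 = -a by ring]
      field_simp
    have heq := intervalIntegral.integral_eq_sub_of_hasDerivAt hF
      hc1.intervalIntegrable
    rw [heq]
    have h10 : ((1:ℝ) + t - t) = 1 := by ring
    have h11 : ((1:ℝ) + t - 0) = 1 + t := by ring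
    rw [h10, h11, Real.one_rpow]
    have hia : (0:ℝ) < (1 - a)⁻¹ := by
      apply inv_pos.mpr; linarith
    have hia2 : (1 - a)⁻¹ ≤ 2 := by
      calc (1 - a)⁻¹ ≤ ((1:ℝ)/2)⁻¹ := inv_anti₀ (by norm_num) (by linarith)
        _ = 2 := by norm_num
    have hr : (1:ℝ) ≤ (1 + t) ^ (1 - a) :=
      Real.one_le_rpow (by linarith) (by linarith)
    have hrpos : (0:ℝ) ≤ (1 + t) ^ (1 - a) := by linarith
    nlinarith
  -- assemble
  have hsplit : ∫ s in (0:ℝ)..t, (2 * (1 + t) ^ (-a) * (1 + s) ^ (-(3/2:ℝ)) +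
        3 * (1 + t) ^ (-(3/2:ℝ)) * (1 + t - s) ^ (-a)) =
      2 * (1 + t) ^ (-a) * (∫ s in (0:ℝ)..t, (1 + s) ^ (-(3/2:ℝ))) +
      3 * (1 + t) ^ (-(3/2:ℝ)) * (∫ s in (0:ℝ)..t, (1 + t - s) ^ (-a)) := by
    rw [intervalIntegral.integral_add hint_g1 hint_g2,
      intervalIntegral.integral_const_mul, intervalIntegral.integral_const_mul]
  have hkey : (1 + t) ^ (-(3/2:ℝ)) * (1 + t) ^ (1 - a) ≤ (1 + t) ^ (-a) := by
    rw [← Real.rpow_add h1t]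
    exact Real.rpow_le_rpow_of_exponent_le (by linarith) (by linarith)
  have ha1 : (0:ℝ) ≤ (1 + t) ^ (-a) := Real.rpow_nonneg h1t.le _
  have ha2 : (0:ℝ) ≤ (1 + t) ^ (-(3/2:ℝ)) := Real.rpow_nonneg h1t.le _
  have hb1 : 2 * (1 + t) ^ (-a) * (∫ s in (0:ℝ)..t, (1 + s) ^ (-(3/2:ℝ))) ≤
      2 * (1 + t) ^ (-a) * 2 :=
    mul_le_mul_of_nonneg_left hI1 (by positivity)
  have hb2 : 3 * (1 + t) ^ (-(3/2:ℝ)) * (∫ s in (0:ℝ)..t, (1 + t - s) ^ (-a)) ≤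
      3 * (1 + t) ^ (-(3/2:ℝ)) * (2 * (1 + t) ^ (1 - a)) :=
    mul_le_mul_of_nonneg_left hI2 (by positivity)
  calc ∫ s in (0:ℝ)..t, (1 + t - s) ^ (-a) * (1 + s) ^ (-(3/2:ℝ))
      ≤ 2 * (1 + t) ^ (-a) * (∫ s in (0:ℝ)..t, (1 + s) ^ (-(3/2:ℝ))) +
        3 * (1 + t) ^ (-(3/2:ℝ)) * (∫ s in (0:ℝ)..t, (1 + t - s) ^ (-a)) := by
          rw [← hsplit]; exact hmono
    _ ≤ 2 * (1 + t) ^ (-a) * 2 + 3 * (1 + t) ^ (-(3/2:ℝ)) * (2 * (1 + t) ^ (1 - a)) := by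
          linarith
    _ = 4 * (1 + t) ^ (-a) + 6 * ((1 + t) ^ (-(3/2:ℝ)) * (1 + t) ^ (1 - a)) := by ring
    _ ≤ 4 * (1 + t) ^ (-a) + 6 * (1 + t) ^ (-a) := by linarith
    _ = 10 * (1 + t) ^ (-a) := by ring
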